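/- For every positive integer k, the graph XI_{2k+1} satisfies χ'_irr(XI_{2k+1}) = 3, i.e., it admits a locally irregular edge-coloring using 3 colors but none using at most 2 colors. -/
import Mathlib


/-- A graph is *locally irregular* if no two adjacent vertices have the same degree. -/
def LocallyIrregular {V : Type*} (G : SimpleGraph V) : Prop :=
  ∀ ⦃u v : V⦄, G.Adj u v → (G.neighborSet u).ncard ≠ (G.neighborSet v).ncard

/-- `HasLIEC G k` : `G` admits a locally irregular edge-coloring using at most `k` colors,
i.e. an assignment of one of `k` colors to every edge such that the edges of each fixed
color induce a locally irregular graph. -/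
def HasLIEC {V : Type*} (G : SimpleGraph V) (k : ℕ) : Prop :=
  ∃ c : Sym2 V → Fin k, ∀ i : Fin k,
    LocallyIrregular (SimpleGraph.fromEdgeSet {e | e ∈ G.edgeSet ∧ c e = i})

/-- The graph `XI n` : two disjoint cycles of length `3n` (the `inl` vertices `v_a` and the
`inr` vertices `u_a`, `a ∈ ZMod (3n)`), together with the edges `v_{3i} u_{3i+1}`,
`v_{3i+1} u_{3i}` and `v_{3i+2} u_{3i+2}` for all multiples `3i` modulo `3n`. -/
def XI (n : ℕ) : SimpleGraph (ZMod (3 * n) ⊕ ZMod (3 * n)) :=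
  SimpleGraph.fromRel (fun x y =>
    match x, y with
    | Sum.inl a, Sum.inl b => a - b = 1
    | Sum.inr a, Sum.inr b => a - b = 1
    | Sum.inl a, Sum.inr b =>
        ∃ i : ZMod (3 * n),
          (a = 3 * i ∧ b = 3 * i + 1) ∨ (a = 3 * i + 1 ∧ b = 3 * i) ∨
            (a = 3 * i + 2 ∧ b = 3 * i + 2)
    | Sum.inr _, Sum.inl _ => False)

open Sum

namespace XIWork

variable {n : ℕ}

/-- projection to `ZMod 3`. -/
def pi3 (n : ℕ) : ZMod (3 * n) →+* ZMod 3 := ZMod.castHom ⟨n, rfl⟩ _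

/-- displacement of the cross edge partner -/
def del (n : ℕ) (t : ZMod 3) : ZMod (3 * n) := if t = 0 then 1 else if t = 1 then -1 else 0

/-- cross-edge partner map -/
def sg (n : ℕ) (a : ZMod (3 * n)) : ZMod (3 * n) := a + del n (pi3 n a)

lemma zmod3_cases : ∀ t : ZMod 3, t = 0 ∨ t = 1 ∨ t = 2 := by decide

section

variable (hn : 1 ≤ n)
include hn

lemma N3 : 3 ≤ 3 * n := by omega

lemma one_ne_zero' : (1 : ZMod (3 * n)) ≠ 0 := by
  intro h
  have := (ZMod.natCast_eq_zero_iff 1 (3 * n)).mp (by exact_mod_cast h)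
  have := Nat.le_of_dvd one_pos this
  omega

lemma two_ne_zero' : (2 : ZMod (3 * n)) ≠ 0 := by
  intro h
  have := (ZMod.natCast_eq_zero_iff 2 (3 * n)).mp (by exact_mod_cast h)
  have := Nat.le_of_dvd two_pos this
  omega

lemma succ_ne_pred (a : ZMod (3 * n)) : a + 1 ≠ a - 1 := by
  intro h
  apply two_ne_zero' hn
  have : a + 1 - (a - 1) = 0 := by rw [h]; ring
  calc (2 : ZMod (3 * n)) = a + 1 - (a - 1) := by ring
  _ = 0 := this

end

lemma pi3_triple (i : ZMod (3 * n)) : pi3 n (3 * i) = 0 := by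
  rw [map_mul, (by exact map_ofNat (pi3 n) 3 : pi3 n 3 = 3),
    (by decide : (3 : ZMod 3) = 0), zero_mul]

lemma eq_triple_of_pi3 {a : ZMod (3 * n)} (hn : 1 ≤ n) (h : pi3 n a = 0) :
    ∃ i : ZMod (3 * n), a = 3 * i := by
  haveI : NeZero (3 * n) := ⟨by omega⟩
  have hval : ((a.val : ℕ) : ZMod 3) = 0 := by
    have : a = ((a.val : ℕ) : ZMod (3 * n)) := (ZMod.natCast_zmod_val a).symm
    rw [this] at h
    simpa [pi3, map_natCast] using h
  obtain ⟨m, hm⟩ := (ZMod.natCast_eq_zero_iff _ 3).mp hval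
  refine ⟨(m : ZMod (3 * n)), ?_⟩
  have : a = ((a.val : ℕ) : ZMod (3 * n)) := (ZMod.natCast_zmod_val a).symm
  rw [this, hm]
  push_cast
  ring


lemma sg_of_zero {a : ZMod (3 * n)} (h : pi3 n a = 0) : sg n a = a + 1 := by
  simp [sg, del, h]
lemma sg_of_one {a : ZMod (3 * n)} (h : pi3 n a = 1) : sg n a = a - 1 := by
  simp [sg, del, h, sub_eq_add_neg]
lemma sg_of_two {a : ZMod (3 * n)} (h : pi3 n a = 2) : sg n a = a := by
  have h1 : pi3 n a ≠ 0 := by rw [h]; decide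
  have h2 : pi3 n a ≠ 1 := by rw [h]; decide
  simp [sg, del, h1, h2]

lemma pi3_add_one (a : ZMod (3 * n)) : pi3 n (a + 1) = pi3 n a + 1 := by
  rw [map_add, map_one]

lemma sg_sg (a : ZMod (3 * n)) : sg n (sg n a) = a := by
  rcases zmod3_cases (pi3 n a) with h | h | h
  · have h2 : pi3 n (a + 1) = 1 := by rw [pi3_add_one, h]; decide
    rw [sg_of_zero h, sg_of_one h2]; ring
  · have h2 : pi3 n (a - 1) = 0 := by
      rw [map_sub, map_one, h]; decide
    rw [sg_of_one h, sg_of_zero h2]; ring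
  · rw [sg_of_two h, sg_of_two h]
lemma XI_adj_ll (hn : 1 ≤ n) {a b : ZMod (3 * n)} :
    (XI n).Adj (inl a) (inl b) ↔ (b = a + 1 ∨ b = a - 1) := by
  rw [XI, SimpleGraph.fromRel_adj]
  constructor
  · rintro ⟨-, h | h⟩
    · right; rw [← h]; ring
    · left; rw [← h]; ring
  · rintro (h | h)
    · refine ⟨fun hc => ?_, Or.inr (by rw [h]; ring)⟩
      exact one_ne_zero' hn (by linear_combination -(h ▸ Sum.inl.inj hc : a = a + 1))
    · refine ⟨fun hc => ?_, Or.inl (by rw [h]; ring)⟩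
      exact one_ne_zero' hn (by linear_combination (h ▸ Sum.inl.inj hc : a = a - 1))

lemma XI_adj_rr (hn : 1 ≤ n) {a b : ZMod (3 * n)} :
    (XI n).Adj (inr a) (inr b) ↔ (b = a + 1 ∨ b = a - 1) := by
  rw [XI, SimpleGraph.fromRel_adj]
  constructor
  · rintro ⟨-, h | h⟩
    · right; rw [← h]; ring
    · left; rw [← h]; ring
  · rintro (h | h)
    · refine ⟨fun hc => ?_, Or.inr (by rw [h]; ring)⟩
      exact one_ne_zero' hn (by linear_combination -(h ▸ Sum.inr.inj hc : a = a + 1))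
    · refine ⟨fun hc => ?_, Or.inl (by rw [h]; ring)⟩
      exact one_ne_zero' hn (by linear_combination (h ▸ Sum.inr.inj hc : a = a - 1))

lemma XI_adj_lr (hn : 1 ≤ n) {a b : ZMod (3 * n)} :
    (XI n).Adj (inl a) (inr b) ↔ b = sg n a := by
  rw [XI, SimpleGraph.fromRel_adj]
  constructor
  · rintro ⟨-, h | h⟩
    · obtain ⟨i, ⟨h1, h2⟩ | ⟨h1, h2⟩ | ⟨h1, h2⟩⟩ := h
      · have hp : pi3 n a = 0 := h1 ▸ pi3_triple i
        rw [h2, sg_of_zero hp, h1]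
      · have hp : pi3 n a = 1 := by
          rw [h1, map_add, map_one, pi3_triple i, zero_add]
        rw [h2, sg_of_one hp, h1]; ring
      · have hp : pi3 n a = 2 := by
          rw [h1, map_add, pi3_triple i, zero_add]
          exact map_ofNat (pi3 n) 2
        rw [h2, sg_of_two hp, h1]
    · exact absurd h id
  · intro h
    refine ⟨Sum.inl_ne_inr, Or.inl ?_⟩
    rcases zmod3_cases (pi3 n a) with hp | hp | hp
    · obtain ⟨i, hi⟩ := eq_triple_of_pi3 hn hp
      exact ⟨i, Or.inl ⟨hi, by rw [h, sg_of_zero hp, hi]⟩⟩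
    · have hp' : pi3 n (a - 1) = 0 := by
        rw [map_sub, map_one, hp]; decide
      obtain ⟨i, hi⟩ := eq_triple_of_pi3 hn hp'
      refine ⟨i, Or.inr (Or.inl ⟨by rw [← hi]; ring, ?_⟩)⟩
      rw [h, sg_of_one hp, hi]
    · have hp' : pi3 n (a - 2) = 0 := by
        rw [map_sub, hp, map_ofNat]; decide
      obtain ⟨i, hi⟩ := eq_triple_of_pi3 hn hp'
      refine ⟨i, Or.inr (Or.inr ⟨by rw [← hi]; ring, ?_⟩)⟩
      rw [h, sg_of_two hp, ← hi]; ring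

lemma XI_adj_rl (hn : 1 ≤ n) {a b : ZMod (3 * n)} :
    (XI n).Adj (inr a) (inl b) ↔ b = sg n a := by
  rw [(XI n).adj_comm, XI_adj_lr hn]
  constructor
  · intro h; rw [h, sg_sg]
  · intro h; rw [h, sg_sg]

lemma XI_nbr_inl (hn : 1 ≤ n) (a : ZMod (3 * n)) :
    (XI n).neighborSet (inl a) =
      {inl (a + 1), inl (a - 1), inr (sg n a)} := by
  ext y
  cases y with
  | inl b =>
      simp only [SimpleGraph.mem_neighborSet, XI_adj_ll hn, Set.mem_insert_iff,
        Set.mem_singleton_iff, inl.injEq, reduceCtorEq, or_false]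
  | inr b =>
      simp only [SimpleGraph.mem_neighborSet, XI_adj_lr hn, Set.mem_insert_iff,
        Set.mem_singleton_iff, inr.injEq, reduceCtorEq, false_or]

lemma XI_nbr_inr (hn : 1 ≤ n) (a : ZMod (3 * n)) :
    (XI n).neighborSet (inr a) =
      {inr (a + 1), inr (a - 1), inl (sg n a)} := by
  ext y
  cases y with
  | inl b =>
      simp only [SimpleGraph.mem_neighborSet, XI_adj_rl hn, Set.mem_insert_iff,
        Set.mem_singleton_iff, inl.injEq, reduceCtorEq, false_or, or_false]
  | inr b =>
      simp only [SimpleGraph.mem_neighborSet, XI_adj_rr hn, Set.mem_insert_iff,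
        Set.mem_singleton_iff, inr.injEq, reduceCtorEq, or_false, false_or]

lemma ncard_triple {α : Type*} [DecidableEq α] (p : α → Prop) [DecidablePred p]
    (y1 y2 y3 : α) (h12 : y1 ≠ y2) (h13 : y1 ≠ y3) (h23 : y2 ≠ y3) :
    ({y | y ∈ ({y1, y2, y3} : Set α) ∧ p y}).ncard =
      (if p y1 then 1 else 0) + ((if p y2 then 1 else 0) + (if p y3 then 1 else 0)) := by
  have hset : {y | y ∈ ({y1, y2, y3} : Set α) ∧ p y} =
      ↑(({y1, y2, y3} : Finset α).filter p) := by
    ext y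
    simp [and_comm]
  rw [hset, Set.ncard_coe_finset, Finset.card_filter,
    Finset.sum_insert (by simp [h12, h13]), Finset.sum_insert (by simp [h23]),
    Finset.sum_singleton]

variable {m : ℕ}

/-- the color-`i` subgraph -/
def CH (n m : ℕ) (c : Sym2 (ZMod (3 * n) ⊕ ZMod (3 * n)) → Fin m) (i : Fin m) :
    SimpleGraph (ZMod (3 * n) ⊕ ZMod (3 * n)) :=
  SimpleGraph.fromEdgeSet {e | e ∈ (XI n).edgeSet ∧ c e = i}

lemma CH_adj {c : Sym2 (ZMod (3 * n) ⊕ ZMod (3 * n)) → Fin m} {i : Fin m}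
    {x y : ZMod (3 * n) ⊕ ZMod (3 * n)} :
    (CH n m c i).Adj x y ↔ (XI n).Adj x y ∧ c s(x, y) = i := by
  rw [CH, SimpleGraph.fromEdgeSet_adj]
  constructor
  · rintro ⟨⟨h1, h2⟩, -⟩; exact ⟨h1, h2⟩
  · rintro ⟨h1, h2⟩; exact ⟨⟨h1, h2⟩, h1.ne⟩

lemma CH_nbr {c : Sym2 (ZMod (3 * n) ⊕ ZMod (3 * n)) → Fin m} {i : Fin m}
    (x : ZMod (3 * n) ⊕ ZMod (3 * n)) :
    (CH n m c i).neighborSet x = {y | y ∈ (XI n).neighborSet x ∧ c s(x, y) = i} := by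
  ext y
  exact CH_adj

lemma deg_inl (hn : 1 ≤ n) (c : Sym2 (ZMod (3 * n) ⊕ ZMod (3 * n)) → Fin m) (i : Fin m)
    (a : ZMod (3 * n)) :
    ((CH n m c i).neighborSet (inl a)).ncard =
      (if c s(inl a, inl (a + 1)) = i then 1 else 0) +
        ((if c s(inl a, inl (a - 1)) = i then 1 else 0) +
          (if c s(inl a, inr (sg n a)) = i then 1 else 0)) := by
  classical
  rw [CH_nbr, XI_nbr_inl hn]
  exact ncard_triple _ _ _ _ (by simp [succ_ne_pred hn a]) (by simp) (by simp)

lemma deg_inr (hn : 1 ≤ n) (c : Sym2 (ZMod (3 * n) ⊕ ZMod (3 * n)) → Fin m) (i : Fin m)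
    (a : ZMod (3 * n)) :
    ((CH n m c i).neighborSet (inr a)).ncard =
      (if c s(inr a, inr (a + 1)) = i then 1 else 0) +
        ((if c s(inr a, inr (a - 1)) = i then 1 else 0) +
          (if c s(inr a, inl (sg n a)) = i then 1 else 0)) := by
  classical
  rw [CH_nbr, XI_nbr_inr hn]
  exact ncard_triple _ _ _ _ (by simp [succ_ne_pred hn a]) (by simp) (by simp)

/-! ### The 3-coloring -/

def colA : ZMod 3 → Fin 3 := fun t => if t = 0 then 0 else if t = 1 then 0 else 1
def colB : ZMod 3 → Fin 3 := fun t => if t = 0 then 0 else if t = 1 then 2 else 2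
def colC : ZMod 3 → Fin 3 := fun t => if t = 0 then 1 else 0

def sg3 : ZMod 3 → ZMod 3 := fun t => if t = 0 then t + 1 else if t = 1 then t - 1 else t

lemma pi3_sg (a : ZMod (3 * n)) : pi3 n (sg n a) = sg3 (pi3 n a) := by
  rcases zmod3_cases (pi3 n a) with h | h | h
  · rw [sg_of_zero h, pi3_add_one, h]; decide
  · rw [sg_of_one h, map_sub, map_one, h]; decide
  · rw [sg_of_two h, h]; decide

def cc (n : ℕ) : ZMod (3 * n) ⊕ ZMod (3 * n) → ZMod (3 * n) ⊕ ZMod (3 * n) → Fin 3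
  | inl x, inl y =>
      if y = x + 1 then colA (pi3 n x) else if x = y + 1 then colA (pi3 n y) else 0
  | inr x, inr y =>
      if y = x + 1 then colB (pi3 n x) else if x = y + 1 then colB (pi3 n y) else 0
  | inl x, inr _ => colC (pi3 n x)
  | inr _, inl y => colC (pi3 n y)

lemma cc_symm (hn : 1 ≤ n) (x y : ZMod (3 * n) ⊕ ZMod (3 * n)) : cc n x y = cc n y x := by
  have key : ∀ u v : ZMod (3 * n), v = u + 1 → u = v + 1 → False := fun u v h1 h2 =>
    two_ne_zero' hn (by linear_combination -h1 - h2)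
  cases x with
  | inl a =>
      cases y with
      | inl b =>
          by_cases h1 : b = a + 1 <;> by_cases h2 : a = b + 1
          · exact (key a b h1 h2).elim
          · subst h1; simp [cc, h2]
          · subst h2; simp [cc, h1]
          · simp [cc, h1, h2]
      | inr b => rfl
  | inr a =>
      cases y with
      | inl b => rfl
      | inr b =>
          by_cases h1 : b = a + 1 <;> by_cases h2 : a = b + 1
          · exact (key a b h1 h2).elim
          · subst h1; simp [cc, h2]
          · subst h2; simp [cc, h1]
          · simp [cc, h1, h2]

def cpos (n : ℕ) (hn : 1 ≤ n) : Sym2 (ZMod (3 * n) ⊕ ZMod (3 * n)) → Fin 3 :=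
  Sym2.lift ⟨cc n, cc_symm hn⟩

lemma cpos_mk (hn : 1 ≤ n) (x y : ZMod (3 * n) ⊕ ZMod (3 * n)) :
    cpos n hn s(x, y) = cc n x y := rfl

lemma cc_l_succ (a : ZMod (3 * n)) : cc n (inl a) (inl (a + 1)) = colA (pi3 n a) := by
  simp [cc]

lemma cc_l_pred (hn : 1 ≤ n) (a : ZMod (3 * n)) :
    cc n (inl a) (inl (a - 1)) = colA (pi3 n a - 1) := by
  have h1 : ¬(a - 1 = a + 1) := fun h => succ_ne_pred hn a h.symm
  have h2 : a - 1 + 1 = a := by ring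
  rw [show cc n (inl a) (inl (a - 1)) =
    (if a - 1 = a + 1 then colA (pi3 n a) else
      if a = (a - 1) + 1 then colA (pi3 n (a - 1)) else 0) from rfl,
    if_neg h1, h2, if_pos rfl, map_sub, map_one]

lemma cc_r_succ (a : ZMod (3 * n)) : cc n (inr a) (inr (a + 1)) = colB (pi3 n a) := by
  simp [cc]

lemma cc_r_pred (hn : 1 ≤ n) (a : ZMod (3 * n)) :
    cc n (inr a) (inr (a - 1)) = colB (pi3 n a - 1) := by
  have h1 : ¬(a - 1 = a + 1) := fun h => succ_ne_pred hn a h.symm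
  have h2 : a - 1 + 1 = a := by ring
  rw [show cc n (inr a) (inr (a - 1)) =
    (if a - 1 = a + 1 then colB (pi3 n a) else
      if a = (a - 1) + 1 then colB (pi3 n (a - 1)) else 0) from rfl,
    if_neg h1, h2, if_pos rfl, map_sub, map_one]

def dV : Fin 3 → ZMod 3 → ℕ := fun i t =>
  if t = 0 then (if i = 0 then 1 else if i = 1 then 2 else 0)
  else if t = 1 then (if i = 0 then 3 else 0)
  else (if i = 0 then 2 else if i = 1 then 1 else 0)

def dU : Fin 3 → ZMod 3 → ℕ := fun i t =>
  if t = 0 then (if i = 0 then 2 else if i = 1 then 0 else 1)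
  else if t = 1 then 1
  else (if i = 0 then 1 else if i = 1 then 0 else 2)

lemma degV (hn : 1 ≤ n) (i : Fin 3) (a : ZMod (3 * n)) :
    ((CH n 3 (cpos n hn) i).neighborSet (inl a)).ncard = dV i (pi3 n a) := by
  rw [deg_inl hn, cpos_mk, cpos_mk, cpos_mk, cc_l_succ, cc_l_pred hn,
    show cc n (inl a) (inr (sg n a)) = colC (pi3 n a) from rfl]
  exact (by decide : ∀ (t : ZMod 3) (i : Fin 3),
    (if colA t = i then 1 else 0) +
      ((if colA (t - 1) = i then 1 else 0) + (if colC t = i then 1 else 0)) = dV i t)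
    (pi3 n a) i

lemma degU (hn : 1 ≤ n) (i : Fin 3) (a : ZMod (3 * n)) :
    ((CH n 3 (cpos n hn) i).neighborSet (inr a)).ncard = dU i (pi3 n a) := by
  rw [deg_inr hn, cpos_mk, cpos_mk, cpos_mk, cc_r_succ, cc_r_pred hn,
    show cc n (inr a) (inl (sg n a)) = colC (pi3 n (sg n a)) from rfl, pi3_sg]
  exact (by decide : ∀ (t : ZMod 3) (i : Fin 3),
    (if colB t = i then 1 else 0) +
      ((if colB (t - 1) = i then 1 else 0) + (if colC (sg3 t) = i then 1 else 0)) = dU i t)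
    (pi3 n a) i

lemma pos3 (hn : 1 ≤ n) (i : Fin 3) : LocallyIrregular (CH n 3 (cpos n hn) i) := by
  intro u v hadj
  rw [CH_adj] at hadj
  obtain ⟨hG, hcol⟩ := hadj
  cases u with
  | inl a =>
      cases v with
      | inl b =>
          rcases (XI_adj_ll hn).mp hG with hb | hb
          · subst hb
            rw [cpos_mk, cc_l_succ] at hcol
            rw [degV hn, degV hn, pi3_add_one]
            exact (by decide : ∀ (t : ZMod 3) (i : Fin 3), colA t = i → dV i t ≠ dV i (t + 1))
              _ _ hcol
          · subst hb
            rw [cpos_mk, cc_l_pred hn] at hcol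
            rw [degV hn, degV hn, map_sub, map_one]
            exact (by decide : ∀ (t : ZMod 3) (i : Fin 3),
              colA (t - 1) = i → dV i t ≠ dV i (t - 1)) _ _ hcol
      | inr b =>
          have hb : b = sg n a := (XI_adj_lr hn).mp hG
          subst hb
          rw [cpos_mk, show cc n (inl a) (inr (sg n a)) = colC (pi3 n a) from rfl] at hcol
          rw [degV hn, degU hn, pi3_sg]
          exact (by decide : ∀ (t : ZMod 3) (i : Fin 3),
            colC t = i → dV i t ≠ dU i (sg3 t)) _ _ hcol
  | inr a =>
      cases v with
      | inl b =>
          have hb : b = sg n a := (XI_adj_rl hn).mp hG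
          subst hb
          rw [cpos_mk, show cc n (inr a) (inl (sg n a)) = colC (pi3 n (sg n a)) from rfl,
            pi3_sg] at hcol
          rw [degU hn, degV hn, pi3_sg]
          exact (by decide : ∀ (t : ZMod 3) (i : Fin 3),
            colC (sg3 t) = i → dU i t ≠ dV i (sg3 t)) _ _ hcol
      | inr b =>
          rcases (XI_adj_rr hn).mp hG with hb | hb
          · subst hb
            rw [cpos_mk, cc_r_succ] at hcol
            rw [degU hn, degU hn, pi3_add_one]
            exact (by decide : ∀ (t : ZMod 3) (i : Fin 3), colB t = i → dU i t ≠ dU i (t + 1))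
              _ _ hcol
          · subst hb
            rw [cpos_mk, cc_r_pred hn] at hcol
            rw [degU hn, degU hn, map_sub, map_one]
            exact (by decide : ∀ (t : ZMod 3) (i : Fin 3),
              colB (t - 1) = i → dU i t ≠ dU i (t - 1)) _ _ hcol

lemma hasLIEC3 (hn : 1 ≤ n) : HasLIEC (XI n) 3 :=
  ⟨cpos n hn, fun i => pos3 hn i⟩

/-! ### Impossibility of 2 colors -/

def RTab : List ℕ := [3, 0, 4, 5, 0, 6, 2, 7, 8, 2, 9, 10, 11, 12, 13, 14, 15, 2, 1, 16, 17, 18, 0, 1, 19, 20, 21, 2, 22, 23, 24, 25, 26, 27, 28, 29, 2, 30, 31, 32, 1, 0, 33, 34, 35, 1, 2, 36, 37, 38, 39, 40, 41, 42, 2, 43, 44, 2, 45, 0, 46, 47, 0, 48]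
def PTab : List Bool := [false, false, false, false, false, false, false, false, false, false, false, false, false, false, false, false, false, true, true, false, false, false, true, false, false, false, false, true, false, false, false, false, false, false, false, false, true, false, false, false, true, true, false, false, false, false, true, false, false, false, false, false, false, false, false, false, false, false, false, false, false, false, false, false]

def RRf (aV aU fV fU : ℕ) : ℕ := RTab.getD (aV * 32 + aU * 16 + fV * 4 + fU) 0
def PPf (aV aU fV fU : ℕ) : Bool := PTab.getD (aV * 32 + aU * 16 + fV * 4 + fU) false

set_option maxRecDepth 10000 in
set_option synthInstance.maxHeartbeats 1000000 in
set_option synthInstance.maxSize 5000 in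
set_option maxHeartbeats 2000000 in
lemma step_core : ∀ (aV aU aV' aU' e1 e2 e3 e4 e5 e6 e7 : Fin 2) (fV fU : Fin 4),
    (fV.1 ≠ e1.1 + (aV.1 + e5.1)) → (fU.1 ≠ e3.1 + (aU.1 + e6.1)) →
    (e1.1 + (aV.1 + e5.1) ≠ e2.1 + (e1.1 + e6.1)) →
    (e2.1 + (e1.1 + e6.1) ≠ aV'.1 + (e2.1 + e7.1)) →
    (e3.1 + (aU.1 + e6.1) ≠ e4.1 + (e3.1 + e5.1)) →
    (e4.1 + (e3.1 + e5.1) ≠ aU'.1 + (e4.1 + e7.1)) →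
    (e1.1 + (aV.1 + e5.1) ≠ e4.1 + (e3.1 + e5.1)) →
    (e2.1 + (e1.1 + e6.1) ≠ e3.1 + (aU.1 + e6.1)) →
    (aV'.1 + (e2.1 + e7.1) ≠ aU'.1 + (e4.1 + e7.1)) →
    RRf aV'.1 aU'.1 (aV'.1 + (e2.1 + e7.1)) (aU'.1 + (e4.1 + e7.1)) ≤ RRf aV.1 aU.1 fV.1 fU.1 ∧
    (RRf aV'.1 aU'.1 (aV'.1 + (e2.1 + e7.1)) (aU'.1 + (e4.1 + e7.1)) = RRf aV.1 aU.1 fV.1 fU.1 →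
      PPf aV'.1 aU'.1 (aV'.1 + (e2.1 + e7.1)) (aU'.1 + (e4.1 + e7.1)) ≠ PPf aV.1 aU.1 fV.1 fU.1) := by
  decide

lemma step_nat (aV aU aV' aU' e1 e2 e3 e4 e5 e6 e7 fV fU : ℕ)
    (b1 : aV ≤ 1) (b2 : aU ≤ 1) (b3 : aV' ≤ 1) (b4 : aU' ≤ 1)
    (b5 : e1 ≤ 1) (b6 : e2 ≤ 1) (b7 : e3 ≤ 1) (b8 : e4 ≤ 1)
    (b9 : e5 ≤ 1) (b10 : e6 ≤ 1) (b11 : e7 ≤ 1) (b12 : fV ≤ 3) (b13 : fU ≤ 3)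
    (h1 : fV ≠ e1 + (aV + e5)) (h2 : fU ≠ e3 + (aU + e6))
    (h3 : e1 + (aV + e5) ≠ e2 + (e1 + e6)) (h4 : e2 + (e1 + e6) ≠ aV' + (e2 + e7))
    (h5 : e3 + (aU + e6) ≠ e4 + (e3 + e5)) (h6 : e4 + (e3 + e5) ≠ aU' + (e4 + e7))
    (h7 : e1 + (aV + e5) ≠ e4 + (e3 + e5)) (h8 : e2 + (e1 + e6) ≠ e3 + (aU + e6))
    (h9 : aV' + (e2 + e7) ≠ aU' + (e4 + e7)) :
    RRf aV' aU' (aV' + (e2 + e7)) (aU' + (e4 + e7)) ≤ RRf aV aU fV fU ∧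
    (RRf aV' aU' (aV' + (e2 + e7)) (aU' + (e4 + e7)) = RRf aV aU fV fU →
      PPf aV' aU' (aV' + (e2 + e7)) (aU' + (e4 + e7)) ≠ PPf aV aU fV fU) :=
  step_core ⟨aV, by omega⟩ ⟨aU, by omega⟩ ⟨aV', by omega⟩ ⟨aU', by omega⟩
    ⟨e1, by omega⟩ ⟨e2, by omega⟩ ⟨e3, by omega⟩ ⟨e4, by omega⟩ ⟨e5, by omega⟩
    ⟨e6, by omega⟩ ⟨e7, by omega⟩ ⟨fV, by omega⟩ ⟨fU, by omega⟩
    h1 h2 h3 h4 h5 h6 h7 h8 h9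

lemma no2 (hn : 1 ≤ n) (hodd : n % 2 = 1) : ¬ HasLIEC (XI n) 2 := by
  rintro ⟨c, hc⟩
  classical
  let f : ZMod (3 * n) ⊕ ZMod (3 * n) → ℕ := fun x => ((CH n 2 c 0).neighborSet x).ncard
  let cb : ZMod (3 * n) ⊕ ZMod (3 * n) → ZMod (3 * n) ⊕ ZMod (3 * n) → ℕ :=
    fun x y => if c s(x, y) = 0 then 1 else 0
  have hcb : ∀ x y, cb x y ≤ 1 := by
    intro x y
    show (if c s(x, y) = 0 then 1 else 0) ≤ 1
    split <;> omega
  have hcb_comm : ∀ x y, cb x y = cb y x := by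
    intro x y
    show (if c s(x, y) = 0 then 1 else 0) = (if c s(y, x) = 0 then 1 else 0)
    rw [Sym2.eq_swap]
  have key2 : ∀ e : Sym2 (ZMod (3 * n) ⊕ ZMod (3 * n)),
      ((if c e = 0 then 1 else 0) : ℕ) + (if c e = 1 then 1 else 0) = 1 := by
    intro e
    rcases (by decide : ∀ v : Fin 2, v = 0 ∨ v = 1) (c e) with h | h <;> simp [h]
  have hsum : ∀ x, f x + ((CH n 2 c 1).neighborSet x).ncard = 3 := by
    intro x
    show ((CH n 2 c 0).neighborSet x).ncard + _ = 3
    cases x with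
    | inl a =>
        rw [deg_inl hn c 0 a, deg_inl hn c 1 a]
        have k1 := key2 s(inl a, inl (a + 1))
        have k2 := key2 s(inl a, inl (a - 1))
        have k3 := key2 s(inl a, inr (sg n a))
        omega
    | inr a =>
        rw [deg_inr hn c 0 a, deg_inr hn c 1 a]
        have k1 := key2 s(inr a, inr (a + 1))
        have k2 := key2 s(inr a, inr (a - 1))
        have k3 := key2 s(inr a, inl (sg n a))
        omega
  have hfbound : ∀ x, f x ≤ 3 := by
    intro x
    have := hsum x
    omega
  have hproper : ∀ x y, (XI n).Adj x y → f x ≠ f y := by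
    intro x y hadj
    have hadj' : (CH n 2 c (c s(x, y))).Adj x y := CH_adj.mpr ⟨hadj, rfl⟩
    have hne : ((CH n 2 c (c s(x, y))).neighborSet x).ncard ≠
        ((CH n 2 c (c s(x, y))).neighborSet y).ncard := hc _ hadj'
    rcases (by decide : ∀ v : Fin 2, v = 0 ∨ v = 1) (c s(x, y)) with h | h
    · rw [h] at hne; exact hne
    · rw [h] at hne
      have hx := hsum x
      have hy := hsum y
      intro heq
      exact hne (by omega)
  have hf_inl : ∀ a, f (inl a) =
      cb (inl a) (inl (a + 1)) + (cb (inl a) (inl (a - 1)) + cb (inl a) (inr (sg n a))) :=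
    fun a => deg_inl hn c 0 a
  have hf_inr : ∀ a, f (inr a) =
      cb (inr a) (inr (a + 1)) + (cb (inr a) (inr (a - 1)) + cb (inr a) (inl (sg n a))) :=
    fun a => deg_inr hn c 0 a
  -- the block transfer step
  have block : ∀ b : ZMod (3 * n), pi3 n b = 0 →
      (RRf (cb (inl (b + 3)) (inl (b + 2))) (cb (inr (b + 3)) (inr (b + 2)))
          (f (inl (b + 2))) (f (inr (b + 2))) ≤
        RRf (cb (inl b) (inl (b - 1))) (cb (inr b) (inr (b - 1)))
          (f (inl (b - 1))) (f (inr (b - 1)))) ∧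
      (RRf (cb (inl (b + 3)) (inl (b + 2))) (cb (inr (b + 3)) (inr (b + 2)))
          (f (inl (b + 2))) (f (inr (b + 2))) =
        RRf (cb (inl b) (inl (b - 1))) (cb (inr b) (inr (b - 1)))
          (f (inl (b - 1))) (f (inr (b - 1))) →
        PPf (cb (inl (b + 3)) (inl (b + 2))) (cb (inr (b + 3)) (inr (b + 2)))
            (f (inl (b + 2))) (f (inr (b + 2))) ≠
          PPf (cb (inl b) (inl (b - 1))) (cb (inr b) (inr (b - 1)))
            (f (inl (b - 1))) (f (inr (b - 1)))) := by
    intro b hpi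
    have hpi1 : pi3 n (b + 1) = 1 := by rw [pi3_add_one, hpi]; decide
    have hpi2 : pi3 n (b + 2) = 2 := by
      rw [show b + 2 = (b + 1) + 1 from by ring, pi3_add_one, hpi1]; decide
    have hsg0 : sg n b = b + 1 := sg_of_zero hpi
    have hsg1 : sg n (b + 1) = b := by rw [sg_of_one hpi1]; ring
    have hsg2 : sg n (b + 2) = b + 2 := sg_of_two hpi2
    have hfV0 : f (inl b) =
        cb (inl b) (inl (b + 1)) + (cb (inl b) (inl (b - 1)) + cb (inl b) (inr (b + 1))) := by
      rw [hf_inl b, hsg0]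
    have hfV1 : f (inl (b + 1)) =
        cb (inl (b + 1)) (inl (b + 2)) +
          (cb (inl b) (inl (b + 1)) + cb (inl (b + 1)) (inr b)) := by
      rw [hf_inl (b + 1), hsg1, show b + 1 + 1 = b + 2 from by ring,
        show b + 1 - 1 = b from by ring, hcb_comm (inl (b + 1)) (inl b)]
    have hfV2 : f (inl (b + 2)) =
        cb (inl (b + 2)) (inl (b + 3)) +
          (cb (inl (b + 1)) (inl (b + 2)) + cb (inl (b + 2)) (inr (b + 2))) := by
      rw [hf_inl (b + 2), hsg2, show b + 2 + 1 = b + 3 from by ring,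
        show b + 2 - 1 = b + 1 from by ring, hcb_comm (inl (b + 2)) (inl (b + 1))]
    have hfU0 : f (inr b) =
        cb (inr b) (inr (b + 1)) + (cb (inr b) (inr (b - 1)) + cb (inl (b + 1)) (inr b)) := by
      rw [hf_inr b, hsg0, hcb_comm (inr b) (inl (b + 1))]
    have hfU1 : f (inr (b + 1)) =
        cb (inr (b + 1)) (inr (b + 2)) +
          (cb (inr b) (inr (b + 1)) + cb (inl b) (inr (b + 1))) := by
      rw [hf_inr (b + 1), hsg1, show b + 1 + 1 = b + 2 from by ring,
        show b + 1 - 1 = b from by ring, hcb_comm (inr (b + 1)) (inr b),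
        hcb_comm (inr (b + 1)) (inl b)]
    have hfU2 : f (inr (b + 2)) =
        cb (inr (b + 2)) (inr (b + 3)) +
          (cb (inr (b + 1)) (inr (b + 2)) + cb (inl (b + 2)) (inr (b + 2))) := by
      rw [hf_inr (b + 2), hsg2, show b + 2 + 1 = b + 3 from by ring,
        show b + 2 - 1 = b + 1 from by ring, hcb_comm (inr (b + 2)) (inr (b + 1)),
        hcb_comm (inr (b + 2)) (inl (b + 2))]
    have c1 := hproper _ _ ((XI_adj_ll hn).mpr (Or.inl (show b = b - 1 + 1 from by ring)) :
      (XI n).Adj (inl (b - 1)) (inl b))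
    have c2 := hproper _ _ ((XI_adj_rr hn).mpr (Or.inl (show b = b - 1 + 1 from by ring)) :
      (XI n).Adj (inr (b - 1)) (inr b))
    have c3 := hproper _ _ ((XI_adj_ll hn).mpr (Or.inl rfl) :
      (XI n).Adj (inl b) (inl (b + 1)))
    have c4 := hproper _ _ ((XI_adj_ll hn).mpr (Or.inl (show b + 2 = b + 1 + 1 from by ring)) :
      (XI n).Adj (inl (b + 1)) (inl (b + 2)))
    have c5 := hproper _ _ ((XI_adj_rr hn).mpr (Or.inl rfl) :
      (XI n).Adj (inr b) (inr (b + 1)))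
    have c6 := hproper _ _ ((XI_adj_rr hn).mpr (Or.inl (show b + 2 = b + 1 + 1 from by ring)) :
      (XI n).Adj (inr (b + 1)) (inr (b + 2)))
    have c7 := hproper _ _ ((XI_adj_lr hn).mpr hsg0.symm :
      (XI n).Adj (inl b) (inr (b + 1)))
    have c8 := hproper _ _ ((XI_adj_lr hn).mpr hsg1.symm :
      (XI n).Adj (inl (b + 1)) (inr b))
    have c9 := hproper _ _ ((XI_adj_lr hn).mpr hsg2.symm :
      (XI n).Adj (inl (b + 2)) (inr (b + 2)))
    rw [hfV0] at c1 c3 c7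
    rw [hfV1] at c3 c4 c8
    rw [hfV2] at c4 c9
    rw [hfU0] at c2 c5 c8
    rw [hfU1] at c5 c6 c7
    rw [hfU2] at c6 c9
    have main := step_nat (cb (inl b) (inl (b - 1))) (cb (inr b) (inr (b - 1)))
      (cb (inl (b + 2)) (inl (b + 3))) (cb (inr (b + 2)) (inr (b + 3)))
      (cb (inl b) (inl (b + 1))) (cb (inl (b + 1)) (inl (b + 2)))
      (cb (inr b) (inr (b + 1))) (cb (inr (b + 1)) (inr (b + 2)))
      (cb (inl b) (inr (b + 1))) (cb (inl (b + 1)) (inr b))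
      (cb (inl (b + 2)) (inr (b + 2)))
      (f (inl (b - 1))) (f (inr (b - 1)))
      (hcb _ _) (hcb _ _) (hcb _ _) (hcb _ _) (hcb _ _) (hcb _ _) (hcb _ _)
      (hcb _ _) (hcb _ _) (hcb _ _) (hcb _ _) (hfbound _) (hfbound _)
      c1 c2 c3 c4 c5 c6 c7 c8 c9
    rw [hcb_comm (inl (b + 3)) (inl (b + 2)), hcb_comm (inr (b + 3)) (inr (b + 2)),
      hfV2, hfU2]
    exact main
  -- the walk around the cycle
  let a : ℕ → ZMod (3 * n) := fun j => ((3 * j : ℕ) : ZMod (3 * n))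
  have ha0 : ∀ j, pi3 n (a j) = 0 := by
    intro j
    show pi3 n ((3 * j : ℕ) : ZMod (3 * n)) = 0
    rw [map_natCast]
    push_cast
    rw [show ((3 : ZMod 3)) = 0 from by decide, zero_mul]
  have hastep : ∀ j, a (j + 1) = a j + 3 := by
    intro j
    show ((3 * (j + 1) : ℕ) : ZMod (3 * n)) = ((3 * j : ℕ) : ZMod (3 * n)) + 3
    push_cast
    ring
  let rk : ℕ → ℕ := fun j =>
    RRf (cb (inl (a j)) (inl (a j - 1))) (cb (inr (a j)) (inr (a j - 1)))
      (f (inl (a j - 1))) (f (inr (a j - 1)))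
  let pr : ℕ → Bool := fun j =>
    PPf (cb (inl (a j)) (inl (a j - 1))) (cb (inr (a j)) (inr (a j - 1)))
      (f (inl (a j - 1))) (f (inr (a j - 1)))
  have hrk1 : ∀ j, rk (j + 1) =
      RRf (cb (inl (a j + 3)) (inl (a j + 2))) (cb (inr (a j + 3)) (inr (a j + 2)))
        (f (inl (a j + 2))) (f (inr (a j + 2))) := by
    intro j
    show RRf (cb (inl (a (j + 1))) (inl (a (j + 1) - 1)))
        (cb (inr (a (j + 1))) (inr (a (j + 1) - 1)))
        (f (inl (a (j + 1) - 1))) (f (inr (a (j + 1) - 1))) = _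
    rw [hastep j, show a j + 3 - 1 = a j + 2 from by ring]
  have hpr1 : ∀ j, pr (j + 1) =
      PPf (cb (inl (a j + 3)) (inl (a j + 2))) (cb (inr (a j + 3)) (inr (a j + 2)))
        (f (inl (a j + 2))) (f (inr (a j + 2))) := by
    intro j
    show PPf (cb (inl (a (j + 1))) (inl (a (j + 1) - 1)))
        (cb (inr (a (j + 1))) (inr (a (j + 1) - 1)))
        (f (inl (a (j + 1) - 1))) (f (inr (a (j + 1) - 1))) = _
    rw [hastep j, show a j + 3 - 1 = a j + 2 from by ring]
  have hstep : ∀ j, rk (j + 1) ≤ rk j ∧ (rk (j + 1) = rk j → pr (j + 1) ≠ pr j) := by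
    intro j
    rw [hrk1 j, hpr1 j]
    exact block (a j) (ha0 j)
  have han : a n = a 0 := by
    show ((3 * n : ℕ) : ZMod (3 * n)) = ((3 * 0 : ℕ) : ZMod (3 * n))
    simp [ZMod.natCast_self]
  have hrkn : rk n = rk 0 := by
    show RRf (cb (inl (a n)) (inl (a n - 1))) _ _ _ = _
    rw [han]
  have hprn : pr n = pr 0 := by
    show PPf (cb (inl (a n)) (inl (a n - 1))) _ _ _ = _
    rw [han]
  have hmono : ∀ i j : ℕ, i ≤ j → rk j ≤ rk i := by
    intro i j h
    induction h with
    | refl => exact le_rfl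
    | step h ih => exact le_trans (hstep _).1 ih
  have hconst : ∀ j, j ≤ n → rk j = rk 0 :=
    fun j hj => le_antisymm (hmono 0 j (Nat.zero_le j))
      (by rw [← hrkn]; exact hmono j n hj)
  have hflip : ∀ j, j < n → pr (j + 1) = !(pr j) := by
    intro j hj
    have h := (hstep j).2 (by rw [hconst (j + 1) (by omega), hconst j (by omega)])
    revert h
    cases pr (j + 1) <;> cases pr j <;> simp
  have hpar : ∀ j, j ≤ n → pr j = (if j % 2 = 0 then pr 0 else !(pr 0)) := by
    intro j
    induction j with
    | zero => intro _; simp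
    | succ m ih =>
        intro hj
        rw [hflip m (by omega), ih (by omega)]
        by_cases h2 : m % 2 = 0
        · have h3 : (m + 1) % 2 = 1 := by omega
          simp [h2, h3]
        · have h2' : m % 2 = 1 := by omega
          have h3 : (m + 1) % 2 = 0 := by omega
          simp [h2', h3]
  have hfinal := hpar n le_rfl
  rw [hprn, if_neg (by omega)] at hfinal
  cases h0 : pr 0 <;> rw [h0] at hfinal <;> simp at hfinal

end XIWork

/-- For every positive integer `k`, the graph `XI (2k+1)` has locally irregular chromatic
index exactly 3. -/
theorem XI_odd_LIEC (k : ℕ) (hk : 1 ≤ k) :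
    HasLIEC (XI (2 * k + 1)) 3 ∧ ¬ HasLIEC (XI (2 * k + 1)) 2 :=
  ⟨XIWork.hasLIEC3 (by omega), XIWork.no2 (by omega) (by omega)⟩
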